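/- A left cu-uniserial ring either has infinitely many maximal left ideals or is local. -/

import Mathlib

/-- The radical of a module: intersection of all maximal submodules. -/
def ModRadical (R M : Type*) [Ring R] [AddCommGroup M] [Module R M] : Submodule R M :=
  sInf {N : Submodule R M | IsCoatom N}

/-- A module is cyclic if it is generated by one element. -/
def IsCyclicMod (R M : Type*) [Ring R] [AddCommGroup M] [Module R M] : Prop :=
  ∃ x : M, Submodule.span R {x} = ⊤

/-- A module is uniform if it is nonzero and any two nonzero submodules intersect nontrivially. -/
def IsUniformMod (R M : Type*) [Ring R] [AddCommGroup M] [Module R M] : Prop :=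
  Nontrivial M ∧ ∀ A B : Submodule R M, A ≠ ⊥ → B ≠ ⊥ → A ⊓ B ≠ ⊥

/-- A module is cyclic-uniform uniserial (cu-uniserial) if it is nonzero and for every
nonzero finitely generated submodule `K`, the quotient `K / Rad K` is cyclic and uniform. -/
def IsCUUniserial (R M : Type*) [Ring R] [AddCommGroup M] [Module R M] : Prop :=
  Nontrivial M ∧ ∀ K : Submodule R M, K ≠ ⊥ → K.FG →
    IsCyclicMod R (↥K ⧸ ModRadical R ↥K) ∧ IsUniformMod R (↥K ⧸ ModRadical R ↥K)

section Aux

variable {R M N : Type*} [Ring R] [AddCommGroup M] [Module R M] [AddCommGroup N] [Module R N]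

lemma modRadical_map (e : M ≃ₗ[R] N) :
    (ModRadical R M).map (e : M →ₗ[R] N) = ModRadical R N := by
  have himg : (Submodule.orderIsoMapComap e) '' {N' : Submodule R M | IsCoatom N'}
      = {N' : Submodule R N | IsCoatom N'} := by
    ext P
    constructor
    · rintro ⟨Q, hQ, rfl⟩
      exact ((Submodule.orderIsoMapComap e).isCoatom_iff Q).2 hQ
    · intro hP
      refine ⟨(Submodule.orderIsoMapComap e).symm P, ?_,
        (Submodule.orderIsoMapComap e).apply_symm_apply P⟩
      have := ((Submodule.orderIsoMapComap e).symm.isCoatom_iff P).2 hP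
      simpa using this
  calc (ModRadical R M).map (e : M →ₗ[R] N)
      = (Submodule.orderIsoMapComap e) (sInf {N' : Submodule R M | IsCoatom N'}) := rfl
    _ = ⨅ a ∈ {N' : Submodule R M | IsCoatom N'}, (Submodule.orderIsoMapComap e) a :=
        (Submodule.orderIsoMapComap e).map_sInf _
    _ = sInf ((Submodule.orderIsoMapComap e) '' {N' : Submodule R M | IsCoatom N'}) :=
        sInf_image.symm
    _ = ModRadical R N := by rw [himg]; rfl

lemma isUniformMod_congr (e : M ≃ₗ[R] N) (hu : IsUniformMod R M) : IsUniformMod R N := by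
  obtain ⟨hnt, hmeet⟩ := hu
  haveI := hnt
  refine ⟨e.symm.toEquiv.nontrivial, fun A B hA hB hAB => ?_⟩
  have hA' : A.map (e.symm : N →ₗ[R] M) ≠ ⊥ := by
    intro hbot
    apply hA
    exact Submodule.map_injective_of_injective e.symm.injective
      (by rw [hbot, Submodule.map_bot])
  have hB' : B.map (e.symm : N →ₗ[R] M) ≠ ⊥ := by
    intro hbot
    apply hB
    exact Submodule.map_injective_of_injective e.symm.injective
      (by rw [hbot, Submodule.map_bot])
  have hinf : A.map (e.symm : N →ₗ[R] M) ⊓ B.map (e.symm : N →ₗ[R] M)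
      = (A ⊓ B).map (e.symm : N →ₗ[R] M) := by
    exact (Submodule.map_inf _ e.symm.injective).symm
  have := hmeet _ _ hA' hB'
  rw [hinf, hAB] at this
  exact this (Submodule.map_bot _)

end Aux

theorem stmt12 {R : Type*} [Ring R] (h : IsCUUniserial R R) :
    {I : Ideal R | IsCoatom I}.Infinite ∨ ∃! I : Ideal R, IsCoatom I := by
  classical
  obtain ⟨hnt, hcu⟩ := h
  by_cases hinf : {I : Ideal R | IsCoatom I}.Infinite
  · exact Or.inl hinf
  right
  have hfin : {I : Ideal R | IsCoatom I}.Finite := Set.not_infinite.mp hinf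
  -- the quotient R / Rad R is uniform
  have htopne : (⊤ : Submodule R R) ≠ ⊥ := by
    intro hbot
    obtain ⟨x, y, hxy⟩ := hnt
    apply hxy
    have hx : x ∈ (⊥ : Submodule R R) := hbot ▸ Submodule.mem_top
    have hy : y ∈ (⊥ : Submodule R R) := hbot ▸ Submodule.mem_top
    simp only [Submodule.mem_bot] at hx hy
    rw [hx, hy]
  have hcu_top := hcu ⊤ htopne Module.Finite.fg_top
  have equivQuot : (↥(⊤ : Submodule R R) ⧸ ModRadical R ↥(⊤ : Submodule R R))
      ≃ₗ[R] (R ⧸ ModRadical R R) :=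
    Submodule.Quotient.equiv _ _ (Submodule.topEquiv) (modRadical_map _)
  have hu : IsUniformMod R (R ⧸ ModRadical R R) := isUniformMod_congr equivQuot hcu_top.2
  -- existence of a maximal left ideal
  obtain ⟨I0, hI0⟩ := Ideal.exists_maximal R
  refine ⟨I0, Ideal.isMaximal_def.mp hI0, fun I hI => ?_⟩
  by_contra hne
  -- two distinct coatoms I and I0; derive a contradiction
  set S := {I : Ideal R | IsCoatom I} with hS
  haveI : Finite ↥S := hfin.to_subtype
  haveI hsimple : ∀ i : S, IsSimpleModule R (R ⧸ (i : Ideal R)) :=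
    fun i => isSimpleModule_iff_isCoatom.mpr i.2
  haveI : IsSemisimpleModule R (∀ i : S, R ⧸ (i : Ideal R)) :=
    isSemisimpleModule_of_isSemisimpleModule_submodule'
      (p := fun i => LinearMap.range (LinearMap.single R (fun i : S => R ⧸ (i : Ideal R)) i))
      (fun i => .range _)
      (by simp_rw [LinearMap.range_eq_map, Submodule.iSup_map_single, Submodule.pi_top])
  set f : R →ₗ[R] (∀ i : S, R ⧸ (i : Ideal R)) :=
    LinearMap.pi fun i => (i : Ideal R).mkQ with hf
  have hker : LinearMap.ker f = ModRadical R R := by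
    rw [hf, LinearMap.ker_pi]
    simp only [Submodule.ker_mkQ]
    exact (sInf_eq_iInf' _).symm
  haveI hrg : IsSemisimpleModule R ↥(LinearMap.range f) := inferInstance
  have e2 : (R ⧸ ModRadical R R) ≃ₗ[R] ↥(LinearMap.range f) :=
    (Submodule.quotEquivOfEq (ModRadical R R) (LinearMap.ker f) hker.symm).trans
      (LinearMap.quotKerEquivRange f)
  haveI : IsSemisimpleModule R (R ⧸ ModRadical R R) := IsSemisimpleModule.congr (M := ↥(LinearMap.range f)) e2
  set J := ModRadical R R with hJ
  have hJle : ∀ {I' : Ideal R}, IsCoatom I' → J ≤ I' := fun hI' => sInf_le hI'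
  set A : Submodule R (R ⧸ J) := Submodule.map J.mkQ I with hA
  have hcomapA : Submodule.comap J.mkQ A = I := by
    rw [hA, Submodule.comap_map_mkQ, sup_eq_right.mpr (hJle hI)]
  have hAne_top : A ≠ ⊤ := by
    intro htop
    apply hI.1
    rw [← hcomapA, htop, Submodule.comap_top]
  have hAne_bot : A ≠ ⊥ := by
    intro hbot
    have hIJ : I = J := by
      rw [← hcomapA, hbot]
      simp
    have hII0 : I ≤ I0 := hIJ ▸ hJle (Ideal.isMaximal_def.mp hI0)
    rcases lt_or_eq_of_le hII0 with hlt | heq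
    · exact hI0.ne_top (hI.2 _ hlt)
    · exact hne heq
  obtain ⟨C, hC⟩ := exists_isCompl A
  have hCne : C ≠ ⊥ := by
    intro hbot
    apply hAne_top
    have := hC.sup_eq_top
    rwa [hbot, sup_bot_eq] at this
  exact hu.2 A C hAne_bot hCne (disjoint_iff.mp hC.disjoint)
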